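/- Let C : [0,∞) → ℝ be continuous and let Y, Z : [0,T) → ℝ solve Ẏ = -(1/2) X Y - C(t) Z, Ż = X Y + (1/2) X Z - C(t) Y, Ẋ = βY - γZ, where β < 0 and γ ≤ 0 are constants. If X(0) < 0, Z(0) < 0 < Y(0), and C(t) ≡ 0, then the signs X(t) < 0, Z(t) < 0 < Y(t) persist as long as the solution exists, and the solution blows up in finite time. -/

import Mathlib

open Set Filter Topology

private lemma aux_mono {f f' : ℝ → ℝ} {a b : ℝ}
    (hcont : ContinuousOn f (Icc a b))
    (hder : ∀ t ∈ Ioo a b, HasDerivAt f (f' t) t)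
    (hpos : ∀ t ∈ Ioo a b, 0 ≤ f' t) : MonotoneOn f (Icc a b) := by
  apply monotoneOn_of_deriv_nonneg (convex_Icc a b) hcont
  · intro t ht; rw [interior_Icc] at ht
    exact (hder t ht).differentiableAt.differentiableWithinAt
  · intro t ht; rw [interior_Icc] at ht
    rw [(hder t ht).deriv]; exact hpos t ht

private lemma aux_anti {f f' : ℝ → ℝ} {a b : ℝ}
    (hcont : ContinuousOn f (Icc a b))
    (hder : ∀ t ∈ Ioo a b, HasDerivAt f (f' t) t)
    (hneg : ∀ t ∈ Ioo a b, f' t ≤ 0) : AntitoneOn f (Icc a b) := by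
  apply antitoneOn_of_deriv_nonpos (convex_Icc a b) hcont
  · intro t ht; rw [interior_Icc] at ht
    exact (hder t ht).differentiableAt.differentiableWithinAt
  · intro t ht; rw [interior_Icc] at ht
    rw [(hder t ht).deriv]; exact hneg t ht

/-- Positivity of `Y` for the linear ODE `Y' = -(1/2) X Y`, via Grönwall backwards. -/
private lemma aux_Ypos {T : ℝ} {X Y : ℝ → ℝ}
    (hXc : ∀ t ∈ Ico (0:ℝ) T, ContinuousAt X t)
    (hY : ∀ t ∈ Ico (0:ℝ) T, HasDerivAt Y (-(1/2) * X t * Y t) t)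
    (hY0 : 0 < Y 0) : ∀ t ∈ Ico (0:ℝ) T, 0 < Y t := by
  intro s hs
  by_contra hle
  push_neg at hle
  have hsub : Icc 0 s ⊆ Ico 0 T := fun u hu => ⟨hu.1, lt_of_le_of_lt hu.2 hs.2⟩
  have hYcs : ContinuousOn Y (Icc 0 s) := fun u hu =>
    (hY u (hsub hu)).continuousAt.continuousWithinAt
  obtain ⟨t₂, ht₂m, ht₂⟩ := intermediate_value_Icc' hs.1 hYcs ⟨hle, hY0.le⟩
  have hsub2 : Icc 0 t₂ ⊆ Ico 0 T := fun u hu => hsub ⟨hu.1, le_trans hu.2 ht₂m.2⟩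
  have hXcs : ContinuousOn X (Icc 0 t₂) := fun u hu => (hXc u (hsub2 hu)).continuousWithinAt
  obtain ⟨M, hM⟩ := (isCompact_Icc (a := (0:ℝ)) (b := t₂)).exists_bound_of_continuousOn hXcs
  set g : ℝ → ℝ := fun u => Y (t₂ - u) with hg
  have hgd : ∀ u ∈ Icc 0 t₂, HasDerivAt g ((1/2) * X (t₂ - u) * Y (t₂ - u)) u := by
    intro u hu
    have hmem : t₂ - u ∈ Icc 0 t₂ := ⟨by linarith [hu.2], by linarith [hu.1]⟩
    have h1 : HasDerivAt (fun v : ℝ => t₂ - v) (-1) u := (hasDerivAt_id u).const_sub t₂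
    have h2 := (hY (t₂ - u) (hsub2 hmem)).comp u h1
    rw [show (1/2:ℝ) * X (t₂ - u) * Y (t₂ - u) = -(1 / 2) * X (t₂ - u) * Y (t₂ - u) * -1 by ring]
    exact h2
  have key := norm_le_gronwallBound_of_norm_deriv_right_le (f := g)
      (f' := fun u => (1/2) * X (t₂ - u) * Y (t₂ - u)) (δ := 0) (K := |M|) (ε := 0)
      (a := 0) (b := t₂)
      (fun u hu => (hgd u hu).continuousAt.continuousWithinAt)
      (fun u hu => (hgd u (Ico_subset_Icc_self hu)).hasDerivWithinAt)
      (by simp [hg, ht₂])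
      ?_
  · have ht₂mem : t₂ ∈ Icc (0:ℝ) t₂ := ⟨ht₂m.1, le_rfl⟩
    have := key t₂ ht₂mem
    rw [gronwallBound_ε0] at this
    simp only [zero_mul] at this
    have : Y (t₂ - t₂) = 0 := by
      have h0 : ‖g t₂‖ ≤ 0 := by simpa using this
      simpa [hg] using norm_le_zero_iff.mp h0
    rw [sub_self] at this
    linarith
  · intro u hu
    have hmem : t₂ - u ∈ Icc 0 t₂ := ⟨by linarith [hu.2], by linarith [hu.1]⟩
    have hXb := hM (t₂ - u) hmem
    rw [Real.norm_eq_abs] at hXb ⊢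
    simp only [hg, Real.norm_eq_abs, abs_mul]
    have h1 : |X (t₂ - u)| ≤ |M| := le_trans hXb (le_abs_self M)
    have h2 : (0:ℝ) ≤ |Y (t₂ - u)| := abs_nonneg _
    have h3 : (0:ℝ) ≤ |X (t₂ - u)| := abs_nonneg _
    have h4 : |(1:ℝ)/2| = 1/2 := by norm_num
    rw [h4]
    nlinarith

set_option maxHeartbeats 1000000 in
/-- Corner ODE system `Ẏ = -(1/2)XY - C(t)Z`, `Ż = XY + (1/2)XZ - C(t)Y`, `Ẋ = βY - γZ`
with `β < 0`, `γ ≤ 0`, `C ≡ 0`, and initial signs `X(0) < 0`, `Z(0) < 0 < Y(0)`: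
the signs persist as long as the solution exists, and the solution blows up in finite
time (there is a finite `T*` bounding the length of any interval of existence). -/
theorem stmt_17 (β γ X₀ Y₀ Z₀ : ℝ) (hβ : β < 0) (hγ : γ ≤ 0)
    (hX₀ : X₀ < 0) (hZ₀ : Z₀ < 0) (hY₀ : 0 < Y₀) :
    ∃ Tstar : ℝ, 0 < Tstar ∧
      ∀ (T : ℝ) (C X Y Z : ℝ → ℝ),
        Continuous C → (∀ t, C t = 0) →
        (∀ t ∈ Ico (0:ℝ) T, HasDerivAt Y (-(1 / 2) * X t * Y t - C t * Z t) t) →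
        (∀ t ∈ Ico (0:ℝ) T, HasDerivAt Z (X t * Y t + (1 / 2) * X t * Z t - C t * Y t) t) →
        (∀ t ∈ Ico (0:ℝ) T, HasDerivAt X (β * Y t - γ * Z t) t) →
        X 0 = X₀ → Y 0 = Y₀ → Z 0 = Z₀ →
        (∀ t ∈ Ico (0:ℝ) T, X t < 0 ∧ Z t < 0 ∧ 0 < Y t) ∧ T ≤ Tstar := by
  have hb : (0:ℝ) < -β/4 := by linarith
  have hbY : (0:ℝ) < -β/4 * Y₀ := mul_pos hb hY₀
  refine ⟨1 + (-β/4 * Y₀)⁻¹, by positivity, ?_⟩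
  intro T C X Y Z hCc hC0 hYd hZd hXd hXinit hYinit hZinit
  -- simplified derivatives
  have hY : ∀ t ∈ Ico (0:ℝ) T, HasDerivAt Y (-(1/2) * X t * Y t) t := by
    intro t ht; simpa [hC0 t] using hYd t ht
  have hZ : ∀ t ∈ Ico (0:ℝ) T, HasDerivAt Z (X t * Y t + (1/2) * X t * Z t) t := by
    intro t ht; simpa [hC0 t] using hZd t ht
  have hXc : ∀ t ∈ Ico (0:ℝ) T, ContinuousAt X t := fun t ht => (hXd t ht).continuousAt
  have hYc : ∀ t ∈ Ico (0:ℝ) T, ContinuousAt Y t := fun t ht => (hY t ht).continuousAt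
  have hZc : ∀ t ∈ Ico (0:ℝ) T, ContinuousAt Z t := fun t ht => (hZ t ht).continuousAt
  have hYpos : ∀ t ∈ Ico (0:ℝ) T, 0 < Y t :=
    aux_Ypos hXc hY (by rw [hYinit]; exact hY₀)
  -- sign persistence
  have hsign : ∀ s ∈ Ico (0:ℝ) T, X s < 0 ∧ Z s < 0 := by
    intro s hs
    by_contra hcon
    rw [not_and_or] at hcon
    push_neg at hcon
    have hsub : Icc 0 s ⊆ Ico 0 T := fun u hu => ⟨hu.1, lt_of_le_of_lt hu.2 hs.2⟩
    have hXco : ContinuousOn X (Icc 0 s) := fun u hu => (hXc u (hsub hu)).continuousWithinAt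
    have hZco : ContinuousOn Z (Icc 0 s) := fun u hu => (hZc u (hsub hu)).continuousWithinAt
    set F := {t : ℝ | t ∈ Icc 0 s ∧ (0 ≤ X t ∨ 0 ≤ Z t)} with hF
    have hFcl : IsClosed F := by
      have h1 : F = (Icc 0 s ∩ X ⁻¹' Ici 0) ∪ (Icc 0 s ∩ Z ⁻¹' Ici 0) := by
        ext t
        simp only [hF, mem_setOf_eq, mem_union, mem_inter_iff, mem_preimage, mem_Ici, and_or_left]
      rw [h1]
      exact (hXco.preimage_isClosed_of_isClosed isClosed_Icc isClosed_Ici).union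
        (hZco.preimage_isClosed_of_isClosed isClosed_Icc isClosed_Ici)
    have hFne : F.Nonempty := ⟨s, ⟨⟨hs.1, le_rfl⟩, hcon⟩⟩
    have hFbdd : BddBelow F := ⟨0, fun t ht => ht.1.1⟩
    set t₁ := sInf F with ht₁
    have ht₁F : t₁ ∈ F := hFcl.csInf_mem hFne hFbdd
    have h0F : (0:ℝ) ∉ F := by
      intro h
      rcases h.2 with h' | h' <;> rw [hXinit, hZinit] at * <;> simp_all <;> linarith
    have ht₁ne : t₁ ≠ 0 := fun h => h0F (by rw [← h]; exact ht₁F)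
    have ht₁pos : 0 < t₁ := lt_of_le_of_ne ht₁F.1.1 (Ne.symm ht₁ne)
    have hbefore : ∀ t, 0 ≤ t → t < t₁ → X t < 0 ∧ Z t < 0 := by
      intro t ht0 htt
      by_contra hc
      rw [not_and_or] at hc; push_neg at hc
      have htF : t ∈ F := ⟨⟨ht0, le_trans htt.le ht₁F.1.2⟩, hc⟩
      exact absurd (csInf_le hFbdd htF) (not_le.2 htt)
    have hsub1 : Icc 0 t₁ ⊆ Ico 0 T := fun u hu =>
      hsub ⟨hu.1, le_trans hu.2 ht₁F.1.2⟩
    have hXneg1 : X t₁ < 0 := by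
      have hXco1 : ContinuousOn X (Icc 0 t₁) := fun u hu => (hXc u (hsub1 hu)).continuousWithinAt
      have hanti : StrictAntiOn X (Icc 0 t₁) := by
        apply strictAntiOn_of_deriv_neg (convex_Icc 0 t₁) hXco1
        intro t ht; rw [interior_Icc] at ht
        rw [(hXd t (hsub1 ⟨ht.1.le, ht.2.le⟩)).deriv]
        have hZt : Z t < 0 := (hbefore t ht.1.le ht.2).2
        have hYt : 0 < Y t := hYpos t (hsub1 ⟨ht.1.le, ht.2.le⟩)
        nlinarith
      have := hanti ⟨le_rfl, ht₁pos.le⟩ ⟨ht₁pos.le, le_rfl⟩ ht₁pos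
      rw [hXinit] at this
      linarith
    have hZt₁ : Z t₁ = 0 := by
      have hge : 0 ≤ Z t₁ := by
        rcases ht₁F.2 with h | h
        · linarith
        · exact h
      have hle : Z t₁ ≤ 0 := by
        have htd : Tendsto Z (𝓝[<] t₁) (𝓝 (Z t₁)) :=
          ((hZc t₁ (hsub ht₁F.1)).continuousWithinAt)
        apply le_of_tendsto htd
        filter_upwards [self_mem_nhdsWithin,
          eventually_nhdsWithin_of_eventually_nhds (eventually_gt_nhds ht₁pos)] with t ht1 ht2
        exact ((hbefore t ht2.le ht1).2).le
      linarith
    have hZd1 := hZ t₁ (hsub ht₁F.1)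
    have hval : X t₁ * Y t₁ + (1/2) * X t₁ * Z t₁ < 0 := by
      rw [hZt₁]
      have hYt := hYpos t₁ (hsub ht₁F.1)
      nlinarith
    have hslope := hasDerivAt_iff_tendsto_slope.mp hZd1
    have hev : ∀ᶠ t in 𝓝[<] t₁, slope Z t₁ t < 0 :=
      (hslope.mono_left (nhdsWithin_mono _ (fun x hx => ne_of_lt hx))).eventually_lt_const hval
    obtain ⟨t, ht⟩ := (hev.and ((eventually_nhdsWithin_of_eventually_nhds
      (eventually_gt_nhds ht₁pos)).and self_mem_nhdsWithin)).exists
    have hZt : Z t < 0 := (hbefore t ht.2.1.le ht.2.2).2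
    have hslope_eq : slope Z t₁ t = Z t / (t - t₁) := by
      rw [slope_def_field, hZt₁, sub_zero]
    rw [hslope_eq] at ht
    have htneg : t - t₁ < 0 := sub_neg.2 ht.2.2
    rcases div_neg_iff.mp ht.1 with ⟨h1, _⟩ | ⟨_, h2⟩
    · linarith
    · linarith
  refine ⟨fun t ht => ⟨(hsign t ht).1, (hsign t ht).2, hYpos t ht⟩, ?_⟩
  -- blow-up bound
  by_contra hT
  push_neg at hT
  set s : ℝ := 1 + (-β/4 * Y₀)⁻¹ with hsdef
  have hs1 : 1 < s := by
    have : 0 < (-β/4 * Y₀)⁻¹ := inv_pos.2 hbY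
    simp only [hsdef]; linarith
  have hs0 : (0:ℝ) ≤ s := by linarith
  have hsT : s < T := hT
  have hT0 : (0:ℝ) < T := by linarith
  have hsub : Icc 0 s ⊆ Ico 0 T := fun u hu => ⟨hu.1, lt_of_le_of_lt hu.2 hsT⟩
  -- the integral of Y
  have hYmc : ContinuousOn (fun u : ℝ => Y (max u 0)) (Iio T) := by
    intro u hu
    have h1 : ContinuousAt (fun u : ℝ => max u 0) u := (continuous_id.max continuous_const).continuousAt
    have h2 : ContinuousAt Y ((fun u : ℝ => max u 0) u) := hYc _ ⟨le_max_right _ _, max_lt hu hT0⟩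
    have h3 : ContinuousAt (Y ∘ fun u : ℝ => max u 0) u := ContinuousAt.comp (f := fun u : ℝ => max u 0) h2 h1
    exact h3.continuousWithinAt
  set W : ℝ → ℝ := fun t => ∫ u in (0:ℝ)..t, Y (max u 0) with hWdef
  have hWd : ∀ t ∈ Ico (0:ℝ) T, HasDerivAt W (Y t) t := by
    intro t ht
    have hint : IntervalIntegrable (fun u : ℝ => Y (max u 0)) MeasureTheory.volume 0 t := by
      apply ContinuousOn.intervalIntegrable
      apply hYmc.mono
      rw [uIcc_of_le ht.1]
      exact fun u hu => lt_of_le_of_lt hu.2 ht.2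
    have hmeas := ContinuousOn.stronglyMeasurableAtFilter (μ := MeasureTheory.volume) isOpen_Iio hYmc t ht.2
    have hcont : ContinuousAt (fun u : ℝ => Y (max u 0)) t :=
      hYmc.continuousAt (Iio_mem_nhds ht.2)
    have := intervalIntegral.integral_hasDerivAt_right hint hmeas hcont
    simpa [max_eq_left ht.1] using this
  have hWc : ContinuousOn W (Icc 0 s) := fun u hu =>
    (hWd u (hsub hu)).continuousAt.continuousWithinAt
  have hW0 : W 0 = 0 := intervalIntegral.integral_same
  have hXcs : ContinuousOn X (Icc 0 s) := fun u hu => (hXc u (hsub hu)).continuousWithinAt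
  have hYcs : ContinuousOn Y (Icc 0 s) := fun u hu => (hYc u (hsub hu)).continuousWithinAt
  -- Y is bounded below by Y₀
  have hYmono : MonotoneOn Y (Icc 0 s) := by
    apply aux_mono hYcs (fun t ht => hY t (hsub (Ioo_subset_Icc_self ht)))
    intro t ht
    have h1 := hsign t (hsub (Ioo_subset_Icc_self ht))
    have h2 := hYpos t (hsub (Ioo_subset_Icc_self ht))
    nlinarith [h1.1]
  have hYlb : ∀ t ∈ Icc (0:ℝ) s, Y₀ ≤ Y t := by
    intro t ht
    have := hYmono ⟨le_rfl, hs0⟩ ht ht.1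
    rw [hYinit] at this
    exact this
  -- W t ≥ Y₀ t
  have hg1 : MonotoneOn (fun t => W t - Y₀ * t) (Icc 0 s) := by
    apply aux_mono (f' := fun t => Y t - Y₀ * 1)
      (hWc.sub ((continuous_const.mul continuous_id).continuousOn))
    · intro t ht
      exact (hWd t (hsub (Ioo_subset_Icc_self ht))).sub ((hasDerivAt_id t).const_mul Y₀)
    · intro t ht
      have := hYlb t (Ioo_subset_Icc_self ht)
      linarith
  have hWlb : ∀ t ∈ Icc (0:ℝ) s, Y₀ * t ≤ W t := by
    intro t ht
    have := hg1 ⟨le_rfl, hs0⟩ ht ht.1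
    simp only [hW0, mul_zero, sub_zero, zero_sub] at this
    linarith
  -- X t ≤ β W t + X₀
  have hg2 : MonotoneOn (fun t => β * W t - X t) (Icc 0 s) := by
    apply aux_mono (f' := fun t => β * Y t - (β * Y t - γ * Z t))
      ((hWc.const_smul β).sub hXcs)
    · intro t ht
      exact ((hWd t (hsub (Ioo_subset_Icc_self ht))).const_mul β).sub
        (hXd t (hsub (Ioo_subset_Icc_self ht)))
    · intro t ht
      have hZt := (hsign t (hsub (Ioo_subset_Icc_self ht))).2
      nlinarith
  have hXub : ∀ t ∈ Icc (0:ℝ) s, X t ≤ β * W t + X₀ := by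
    intro t ht
    have := hg2 ⟨le_rfl, hs0⟩ ht ht.1
    simp only [hW0, mul_zero, zero_sub] at this
    rw [hXinit] at this
    linarith
  -- Y t ≥ Y₀ + (-β/4) W t ^ 2
  have hg3 : MonotoneOn (fun t => Y t - (-β/4) * W t ^ 2) (Icc 0 s) := by
    apply aux_mono (f' := fun t => -(1/2) * X t * Y t - (-β/4) * (2 * W t ^ 1 * Y t))
      (hYcs.sub (((hWc.pow 2).const_smul (-β/4))))
    · intro t ht
      exact (hY t (hsub (Ioo_subset_Icc_self ht))).sub
        (((hWd t (hsub (Ioo_subset_Icc_self ht))).pow 2).const_mul (-β/4))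
    · intro t ht
      have hYt := hYpos t (hsub (Ioo_subset_Icc_self ht))
      have hXa := hXub t (Ioo_subset_Icc_self ht)
      have hWt : 0 ≤ W t := by
        have := hWlb t (Ioo_subset_Icc_self ht)
        nlinarith [ht.1, hY₀]
      simp only [pow_one]
      nlinarith [mul_le_mul_of_nonneg_right hXa hYt.le, mul_pos hYt (neg_pos.2 hX₀)]
  have hYq : ∀ t ∈ Icc (0:ℝ) s, Y₀ + (-β/4) * W t ^ 2 ≤ Y t := by
    intro t ht
    have := hg3 ⟨le_rfl, hs0⟩ ht ht.1
    simp only [hW0] at this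
    rw [hYinit] at this
    nlinarith
  -- Riccati comparison on [1, s]
  have hWpos : ∀ t ∈ Icc (1:ℝ) s, 0 < W t := by
    intro t ht
    have h1 : t ∈ Icc (0:ℝ) s := ⟨by linarith [ht.1], ht.2⟩
    have := hWlb t h1
    nlinarith [ht.1]
  have hg4 : AntitoneOn (fun t => (W t)⁻¹ + (-β/4) * t) (Icc 1 s) := by
    apply aux_anti (f' := fun t => -(Y t) / W t ^ 2 + (-β/4) * 1)
    · apply ContinuousOn.add
      · exact ((hWc.mono (Icc_subset_Icc_left (by linarith))).inv₀
          (fun t ht => (hWpos t ht).ne'))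
      · exact (continuous_const.mul continuous_id).continuousOn
    · intro t ht
      have h1 : t ∈ Icc (1:ℝ) s := Ioo_subset_Icc_self ht
      exact ((hWd t (hsub ⟨by linarith [h1.1], h1.2⟩)).inv (hWpos t h1).ne').add
        ((hasDerivAt_id t).const_mul (-β/4))
    · intro t ht
      have h1 : t ∈ Icc (1:ℝ) s := Ioo_subset_Icc_self ht
      have h0 : t ∈ Icc (0:ℝ) s := ⟨by linarith [h1.1], h1.2⟩
      have hq := hYq t h0
      have hW2 : (0:ℝ) < W t ^ 2 := pow_pos (hWpos t h1) 2
      have hYt := hYpos t (hsub h0)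
      have hle : -β/4 ≤ Y t / W t ^ 2 := (le_div_iff₀ hW2).2 (by nlinarith)
      have : -(Y t) / W t ^ 2 = -(Y t / W t ^ 2) := by ring
      rw [this]
      linarith
  have hmem1 : (1:ℝ) ∈ Icc (1:ℝ) s := ⟨le_rfl, hs1.le⟩
  have hmems : s ∈ Icc (1:ℝ) s := ⟨hs1.le, le_rfl⟩
  have hle := hg4 hmem1 hmems hs1.le
  -- (W s)⁻¹ + (-β/4) * s ≤ (W 1)⁻¹ + (-β/4) * 1
  have hW1 : Y₀ ≤ W 1 := by
    have := hWlb 1 ⟨by norm_num, hs1.le⟩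
    linarith
  have hW1inv : (W 1)⁻¹ ≤ Y₀⁻¹ := inv_anti₀ hY₀ hW1
  have hWsinv : 0 < (W s)⁻¹ := inv_pos.2 (hWpos s hmems)
  have hfin : -β/4 * s < Y₀⁻¹ + -β/4 := by
    have := hle
    simp only [mul_one] at this
    linarith
  -- contradiction by arithmetic
  have hc : -β/4 * ((-β/4 * Y₀)⁻¹) = Y₀⁻¹ := by
    rw [mul_inv, ← mul_assoc, mul_inv_cancel₀ hb.ne', one_mul]
  rw [hsdef] at hfin
  rw [mul_add, hc] at hfin
  linarith
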